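/- Let {f_i}_{i=1}^{d+1} ⊂ R^d be a simplex ETF (⟨f_i, f_j⟩ = -1/d for i ≠ j). Let Λ_1, Λ_2 ⊆ {1,...,d+1} be two subsets each of size k with |Λ_1 ∩ Λ_2| = l, and let g_i = (Σ_{j∈Λ_i} f_j)/||Σ_{j∈Λ_i} f_j|| for i = 1, 2. Then |⟨g_1, g_2⟩| = ((d+1)/(k(d+1-k))) · |l - k^2/(d+1)|. -/

import Mathlib

/-- Coherence between normalized sums over two size-`k` subsets of a simplex ETF with
intersection of size `l`: `|⟨g₁, g₂⟩| = ((d+1)/(k(d+1-k))) · |l - k²/(d+1)|`. -/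
theorem coherence_normalized_sums (d k l : ℕ) (hd : 0 < d)
    (f : Fin (d + 1) → EuclideanSpace ℝ (Fin d))
    (hnorm : ∀ i, ‖f i‖ = 1)
    (hangle : ∀ i j, i ≠ j → (inner ℝ (f i) (f j) : ℝ) = -1 / d)
    (Λ₁ Λ₂ : Finset (Fin (d + 1))) (hk1 : 1 ≤ k) (hk2 : k ≤ d)
    (hcard₁ : Λ₁.card = k) (hcard₂ : Λ₂.card = k) (hl : (Λ₁ ∩ Λ₂).card = l)
    (g₁ g₂ : EuclideanSpace ℝ (Fin d))
    (hg₁ : g₁ = ‖∑ j ∈ Λ₁, f j‖⁻¹ • ∑ j ∈ Λ₁, f j)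
    (hg₂ : g₂ = ‖∑ j ∈ Λ₂, f j‖⁻¹ • ∑ j ∈ Λ₂, f j) :
    |(inner ℝ g₁ g₂ : ℝ)| =
      (((d : ℝ) + 1) / (k * ((d : ℝ) + 1 - k))) * |(l : ℝ) - (k : ℝ) ^ 2 / ((d : ℝ) + 1)| := by
  have hd1 : (0:ℝ) < (d:ℝ) := by exact_mod_cast hd
  have hfi : ∀ i j, (inner ℝ (f i) (f j) : ℝ) = if i = j then (1:ℝ) else -1/(d:ℝ) := by
    intro i j
    by_cases h : i = j
    · subst h
      rw [if_pos rfl, real_inner_self_eq_norm_sq, hnorm]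
      norm_num
    · rw [if_neg h, hangle i j h]
  have key : ∀ (A B : Finset (Fin (d+1))), (inner ℝ (∑ j ∈ A, f j) (∑ j ∈ B, f j) : ℝ)
      = ((A ∩ B).card : ℝ) * (1 + 1/(d:ℝ)) + (A.card : ℝ) * B.card * (-1/(d:ℝ)) := by
    intro A B
    rw [sum_inner]
    simp_rw [inner_sum, hfi]
    have step1 : ∀ i ∈ A, (∑ j ∈ B, if i = j then (1:ℝ) else -1/(d:ℝ))
        = (if i ∈ B then (1 + 1/(d:ℝ)) else 0) + (B.card : ℝ) * (-1/(d:ℝ)) := by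
      intro i _
      have step0 : ∀ j ∈ B, (if i = j then (1:ℝ) else -1/(d:ℝ))
          = (if i = j then (1 + 1/(d:ℝ)) else 0) + (-1/(d:ℝ)) := by
        intro j _
        by_cases h : i = j <;> simp [h] <;> ring
      rw [Finset.sum_congr rfl step0, Finset.sum_add_distrib, Finset.sum_ite_eq,
        Finset.sum_const]
      simp [mul_comm]
    rw [Finset.sum_congr rfl step1, Finset.sum_add_distrib, Finset.sum_const,
      Finset.sum_ite_mem, Finset.sum_const]
    push_cast
    ring
  set N : ℝ := (k : ℝ) * ((d:ℝ) + 1 - k) / d with hN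
  have hkd : (k:ℝ) ≤ d := by exact_mod_cast hk2
  have hkpos : (0:ℝ) < k := by exact_mod_cast hk1
  have hNpos : 0 < N := by
    apply div_pos (mul_pos hkpos (by linarith)) hd1
  have hnorm1 : ‖∑ j ∈ Λ₁, f j‖ = Real.sqrt N := by
    rw [show ‖∑ j ∈ Λ₁, f j‖ = Real.sqrt (inner ℝ (∑ j ∈ Λ₁, f j) (∑ j ∈ Λ₁, f j) : ℝ) by
      rw [real_inner_self_eq_norm_sq, Real.sqrt_sq (norm_nonneg _)]]
    congr 1
    rw [key, Finset.inter_self, hcard₁, hN]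
    field_simp
    ring
  have hnorm2 : ‖∑ j ∈ Λ₂, f j‖ = Real.sqrt N := by
    rw [show ‖∑ j ∈ Λ₂, f j‖ = Real.sqrt (inner ℝ (∑ j ∈ Λ₂, f j) (∑ j ∈ Λ₂, f j) : ℝ) by
      rw [real_inner_self_eq_norm_sq, Real.sqrt_sq (norm_nonneg _)]]
    congr 1
    rw [key, Finset.inter_self, hcard₂, hN]
    field_simp
    ring
  have hinner : (inner ℝ g₁ g₂ : ℝ)
      = N⁻¹ * (((l : ℝ) * ((d:ℝ)+1) - (k:ℝ)^2) / d) := by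
    rw [hg₁, hg₂, real_inner_smul_left, real_inner_smul_right, key, hcard₁, hcard₂, hl,
      hnorm1, hnorm2, ← mul_assoc, ← mul_inv, Real.mul_self_sqrt hNpos.le]
    congr 1
    field_simp
    ring
  rw [hinner, abs_mul, abs_of_pos (inv_pos.mpr hNpos), hN]
  have h2 : ((l : ℝ) - (k:ℝ)^2 / ((d:ℝ)+1)) = ((l:ℝ) * ((d:ℝ)+1) - (k:ℝ)^2) / ((d:ℝ)+1) := by
    field_simp
  rw [h2, abs_div, abs_div, abs_of_pos hd1,
    abs_of_pos (show (0:ℝ) < (d:ℝ)+1 by linarith)]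
  have hne : ((d:ℝ)+1-k) ≠ 0 := by linarith
  field_simp
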